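/- Let m, n, p be positive integers with |p−m| > 1 and n ≥ p, set ℓ = min(m,p), and let α, β be positive reals satisfying α·(n−p+2ℓ+1) ≤ 2·(|p−m|−1)·β. Then for all reals f₁ > f₂ > ⋯ > f_ℓ > 0, setting g_i = 1/(1+β·f_i), one has ∑_{i=1}^{ℓ} [ (n−p+2ℓ−3)·f_i·α²·g_i² − 2·(|p−m|+1)·α·g_i + 4·α²·β·f_i²·g_i³ + 4·α·β·f_i·g_i² ] − 2·∑_{i=1}^{ℓ} ∑_{j=i+1}^{ℓ} [ (α²·f_i²·g_i² − α²·f_j²·g_j²)/(f_i − f_j) + 2·(α·f_i·g_i − α·f_j·g_j)/(f_i − f_j) ] ≤ 0. -/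

import Mathlib

/-- Theorem 4.1(ii) (deterministic content): for `|p−m| > 1`, `n ≥ p`, `ℓ = min m p`,
and positive `α, β` with `α(n−p+2ℓ+1) ≤ 2(|p−m|−1)β`, the trace `tr(Φ*)` of the
unbiased estimate of the scalar-quadratic risk difference of the shrinkage
estimator is nonpositive. -/
theorem stmt_8 (m n p ℓ : ℕ) (hm : 0 < m) (hp : 0 < p) (hℓ : ℓ = min m p)
    (hpm : |(p : ℝ) - m| > 1) (hn : n ≥ p)
    (α β : ℝ) (hα : 0 < α) (hβ : 0 < β)
    (hαβ : α * ((n : ℝ) - p + 2 * ℓ + 1) ≤ 2 * (|(p : ℝ) - m| - 1) * β)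
    (f : Fin ℓ → ℝ) (hfpos : ∀ i, 0 < f i) (hfdec : ∀ i j : Fin ℓ, i < j → f j < f i)
    (g : Fin ℓ → ℝ) (hg : ∀ i, g i = 1 / (1 + β * f i)) :
    (∑ i : Fin ℓ,
        (((n : ℝ) - p + 2 * ℓ - 3) * f i * α ^ 2 * g i ^ 2
          - 2 * (|(p : ℝ) - m| + 1) * α * g i
          + 4 * α ^ 2 * β * f i ^ 2 * g i ^ 3
          + 4 * α * β * f i * g i ^ 2))
      - 2 * ∑ i : Fin ℓ, ∑ j ∈ Finset.univ.filter (fun j => i < j),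
          ((α ^ 2 * f i ^ 2 * g i ^ 2 - α ^ 2 * f j ^ 2 * g j ^ 2) / (f i - f j)
            + 2 * (α * f i * g i - α * f j * g j) / (f i - f j)) ≤ 0 := by
  set c : ℝ := |(p : ℝ) - m| with hcdef
  have hc : 1 < c := hpm
  have hden : ∀ i, (0:ℝ) < 1 + β * f i := fun i => by nlinarith [hfpos i]
  have hgpos : ∀ i, 0 < g i := fun i => by
    rw [hg i]; exact div_pos one_pos (hden i)
  have hfg : ∀ i, β * f i * g i = 1 - g i := by
    intro i
    rw [hg i]
    field_simp [(hden i).ne']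
    ring
  -- diagonal terms are nonpositive
  have hdiag : ∀ i ∈ (Finset.univ : Finset (Fin ℓ)),
      (((n : ℝ) - p + 2 * ℓ - 3) * f i * α ^ 2 * g i ^ 2
          - 2 * (c + 1) * α * g i
          + 4 * α ^ 2 * β * f i ^ 2 * g i ^ 3
          + 4 * α * β * f i * g i ^ 2) ≤ 0 := by
    intro i _
    have hfi := hfpos i
    have hgi := hgpos i
    have h1 := hfg i
    have e1 : β * f i ^ 2 * g i ^ 3 = (1 - g i) * (f i * g i ^ 2) := by
      linear_combination (f i * g i ^ 2) * h1
    have e2 : β * f i * g i ^ 2 = g i - g i ^ 2 := by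
      linear_combination (g i) * h1
    have hnn : 0 ≤ α * (f i * g i ^ 2) := by positivity
    have key : α ^ 2 * f i * g i ^ 2 * ((n : ℝ) - p + 2 * ℓ + 1)
        ≤ 2 * (c - 1) * α * (g i - g i ^ 2) := by
      calc α ^ 2 * f i * g i ^ 2 * ((n : ℝ) - p + 2 * ℓ + 1)
          = (α * (f i * g i ^ 2)) * (α * ((n : ℝ) - p + 2 * ℓ + 1)) := by ring
        _ ≤ (α * (f i * g i ^ 2)) * (2 * (c - 1) * β) :=
            mul_le_mul_of_nonneg_left hαβ hnn
        _ = 2 * (c - 1) * α * (β * f i * g i ^ 2) := by ring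
        _ = 2 * (c - 1) * α * (g i - g i ^ 2) := by rw [e2]
    nlinarith [key, e1, e2, mul_nonneg hα.le (sq_nonneg (g i)),
      mul_nonneg (mul_nonneg (sub_nonneg.2 hc.le) hα.le) (sq_nonneg (g i)),
      mul_nonneg (mul_nonneg (sq_nonneg α) hfi.le)
        (pow_nonneg hgi.le 3)]
  -- cross terms are nonnegative
  have hcross : (0:ℝ) ≤ ∑ i : Fin ℓ, ∑ j ∈ Finset.univ.filter (fun j => i < j),
      ((α ^ 2 * f i ^ 2 * g i ^ 2 - α ^ 2 * f j ^ 2 * g j ^ 2) / (f i - f j)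
        + 2 * (α * f i * g i - α * f j * g j) / (f i - f j)) := by
    apply Finset.sum_nonneg
    intro i _
    apply Finset.sum_nonneg
    intro j hj
    have hij : i < j := (Finset.mem_filter.mp hj).2
    have hd : 0 < f i - f j := sub_pos.2 (hfdec i j hij)
    have hx : 0 < f i * g i := mul_pos (hfpos i) (hgpos i)
    have hy : 0 < f j * g j := mul_pos (hfpos j) (hgpos j)
    have hxy : f i * g i - f j * g j = (f i - f j) * (g i * g j) := by
      rw [hg i, hg j]
      rw [div_mul_div_comm, mul_one_div, mul_one_div, one_mul, mul_one_div, div_sub_div _ _ (hden i).ne' (hden j).ne']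
      ring
    have hxy' : 0 ≤ f i * g i - f j * g j := by
      rw [hxy]
      exact mul_nonneg hd.le (mul_nonneg (hgpos i).le (hgpos j).le)
    have hsq : (f j * g j) ^ 2 ≤ (f i * g i) ^ 2 := by nlinarith
    have h1 : 0 ≤ (α ^ 2 * f i ^ 2 * g i ^ 2 - α ^ 2 * f j ^ 2 * g j ^ 2) / (f i - f j) := by
      apply div_nonneg _ hd.le
      nlinarith [mul_nonneg (sq_nonneg α) (sub_nonneg.2 hsq)]
    have h2 : 0 ≤ 2 * (α * f i * g i - α * f j * g j) / (f i - f j) := by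
      apply div_nonneg _ hd.le
      nlinarith
    linarith
  have hS1 := Finset.sum_nonpos hdiag
  linarith
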